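/- Let φ : ℝ → [0, +∞] be a lower semicontinuous convex function with φ(1) = 0 whose domain equals (0, +∞) or [0, +∞), let p ∈ M₁ with p_i > 0 for all i, let ε > 0, and for each i ∈ {1,…,N} let ℓ_i : ℝ^n → ℝ be convex. Define ψ : [0, +∞) × ℝ → ℝ ∪ {+∞} by ψ(λ, t) = λ φ*(t/λ) for λ > 0, and ψ(0, t) = 0 if t ≤ 0, ψ(0, t) = +∞ if t > 0. Then the function g : ℝ^n × ℝ × ℝ → ℝ ∪ {+∞} defined by g(θ, λ, μ) = λ ε + μ + Σ_{i=1}^N p_i ψ(λ, ℓ_i(θ) − μ) when λ ≥ 0, and g(θ, λ, μ) = +∞ when λ < 0, is proper, lower semicontinuous, and convex. -/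

import Mathlib

open scoped BigOperators
open Classical

/-- Fenchel conjugate of `φ : ℝ → [0,+∞]`: `φ*(s) = sup_t (s·t − φ(t))`, in `EReal`. -/
noncomputable def fconj (φ : ℝ → EReal) (s : ℝ) : EReal :=
  ⨆ t : ℝ, (((s * t : ℝ)) : EReal) - φ t

/-- `ψ(λ, t) = λ φ*(t/λ)` for `λ > 0`, and `ψ(0, t) = 0` if `t ≤ 0`, `+∞` if `t > 0`. -/
noncomputable def psiPersp (φ : ℝ → EReal) (l t : ℝ) : EReal :=
  if 0 < l then ((l : ℝ) : EReal) * fconj φ (t / l)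
  else if t ≤ 0 then 0 else ⊤

/-- The objective `g(θ, λ, μ) = λε + μ + Σ_i p_i ψ(λ, ℓ_i(θ) − μ)` for `λ ≥ 0`,
and `+∞` for `λ < 0`. -/
noncomputable def gBall {N n : ℕ} (φ : ℝ → EReal) (p : Fin N → ℝ) (ε : ℝ)
    (ℓ : Fin N → (Fin n → ℝ) → ℝ) (v : (Fin n → ℝ) × ℝ × ℝ) : EReal :=
  if 0 ≤ v.2.1 then
    (((v.2.1 * ε + v.2.2 : ℝ)) : EReal)
      + ∑ i, ((p i : ℝ) : EReal) * psiPersp φ v.2.1 (ℓ i v.1 - v.2.2)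
  else ⊤

/-! ### Auxiliary order isomorphisms and `iSup` lemmas on `EReal` -/

noncomputable def erealAddIso (r : ℝ) : EReal ≃o EReal where
  toFun x := (r : EReal) + x
  invFun x := ((-r : ℝ) : EReal) + x
  left_inv x := by
    show ((-r : ℝ) : EReal) + ((r : EReal) + x) = x
    rw [← add_assoc, ← EReal.coe_add, neg_add_cancel, EReal.coe_zero, zero_add]
  right_inv x := by
    show (r : EReal) + (((-r : ℝ) : EReal) + x) = x
    rw [← add_assoc, ← EReal.coe_add, add_neg_cancel, EReal.coe_zero, zero_add]
  map_rel_iff' := by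
    intro a b
    show (r : EReal) + a ≤ (r : EReal) + b ↔ a ≤ b
    constructor
    · intro h
      have := add_le_add_right h (((-r : ℝ)) : EReal)
      rwa [← add_assoc, ← add_assoc, ← EReal.coe_add, neg_add_cancel, EReal.coe_zero,
        zero_add, zero_add] at this
    · intro h
      exact add_le_add_right h _

noncomputable def erealMulIso (c : ℝ) (hc : 0 < c) : EReal ≃o EReal where
  toFun x := (c : EReal) * x
  invFun x := ((c⁻¹ : ℝ) : EReal) * x
  left_inv x := by
    show ((c⁻¹ : ℝ) : EReal) * ((c : EReal) * x) = x
    rw [← mul_assoc, ← EReal.coe_mul, inv_mul_cancel₀ hc.ne', EReal.coe_one, one_mul]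
  right_inv x := by
    show (c : EReal) * (((c⁻¹ : ℝ) : EReal) * x) = x
    rw [← mul_assoc, ← EReal.coe_mul, mul_inv_cancel₀ hc.ne', EReal.coe_one, one_mul]
  map_rel_iff' := by
    intro a b
    show (c : EReal) * a ≤ (c : EReal) * b ↔ a ≤ b
    constructor
    · intro h
      have := mul_le_mul_of_nonneg_left h
        (by exact_mod_cast (inv_nonneg.2 hc.le) : (0 : EReal) ≤ ((c⁻¹ : ℝ) : EReal))
      rwa [← mul_assoc, ← mul_assoc, ← EReal.coe_mul, inv_mul_cancel₀ hc.ne',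
        EReal.coe_one, one_mul, one_mul] at this
    · intro h
      exact mul_le_mul_of_nonneg_left h (by exact_mod_cast hc.le)

lemma ereal_mul_iSup {ι : Sort*} (c : ℝ) (hc : 0 < c) (f : ι → EReal) :
    (c : EReal) * ⨆ i, f i = ⨆ i, (c : EReal) * f i :=
  (erealMulIso c hc).map_iSup f

lemma ereal_add_iSup {ι : Sort*} [Nonempty ι] (a : EReal) (f : ι → EReal) :
    a + ⨆ i, f i = ⨆ i, a + f i := by
  induction a using EReal.rec with
  | bot => simp [EReal.bot_add]
  | coe r => exact (erealAddIso r).map_iSup f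
  | top =>
    rcases eq_or_ne (⨆ i, f i) ⊥ with h | h
    · have h' : ∀ i, f i = ⊥ := by simpa [iSup_eq_bot] using h
      simp [h, h', EReal.add_bot]
    · rw [EReal.top_add_of_ne_bot h]
      obtain ⟨i, hi⟩ : ∃ i, f i ≠ ⊥ := by
        by_contra hcon
        push_neg at hcon
        exact h (by simp [iSup_eq_bot, hcon])
      refine le_antisymm ?_ le_top
      calc (⊤ : EReal) = ⊤ + f i := (EReal.top_add_of_ne_bot hi).symm
        _ ≤ ⨆ i, ⊤ + f i := le_iSup (fun i => (⊤ : EReal) + f i) i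

lemma ereal_coe_mul_ne_bot {c : ℝ} (hc : 0 < c) {x : EReal} (hx : x ≠ ⊥) :
    (c : EReal) * x ≠ ⊥ := by
  induction x using EReal.rec with
  | bot => exact absurd rfl hx
  | coe r => rw [← EReal.coe_mul]; exact EReal.coe_ne_bot _
  | top => rw [EReal.coe_mul_top_of_pos hc]; exact top_ne_bot

instance : Nonempty {x : ℝ // 0 < x} := ⟨⟨1, one_pos⟩⟩

/-! ### A supremum representation of the conjugate and the perspective function -/

lemma fconj_rep (φ : ℝ → EReal) (hφpos : ∀ t, 0 ≤ φ t)
    (hφconv : ∀ t₁ t₂ : ℝ, ∀ u : ℝ, 0 < u → u < 1 →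
      φ (u * t₁ + (1 - u) * t₂) ≤ (u : EReal) * φ t₁ + ((1 - u : ℝ) : EReal) * φ t₂)
    (hφdom : {t : ℝ | φ t ≠ ⊤} = Set.Ioi (0 : ℝ) ∨ {t : ℝ | φ t ≠ ⊤} = Set.Ici (0 : ℝ))
    (hφ1 : φ 1 = 0) (s : ℝ) :
    fconj φ s = ⨆ x : {x : ℝ // 0 < x}, (((s * x.1 - (φ x.1).toReal : ℝ)) : EReal) := by
  have hnbot : ∀ x : ℝ, φ x ≠ ⊥ := fun x =>
    ((EReal.bot_lt_coe 0).trans_le (by simpa using hφpos x)).ne'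
  have hfin : ∀ x : ℝ, 0 < x → φ x ≠ ⊤ := by
    intro x hx
    have : x ∈ {t : ℝ | φ t ≠ ⊤} := by
      rcases hφdom with h | h
      · rw [h]; exact hx
      · rw [h]; exact hx.le
    exact this
  have hcoe : ∀ x : ℝ, 0 < x → (((φ x).toReal : ℝ) : EReal) = φ x := fun x hx =>
    EReal.coe_toReal (hfin x hx) (hnbot x)
  have hneg : ∀ u : ℝ, u < 0 → φ u = ⊤ := by
    intro u hu
    by_contra hcon
    have : u ∈ {t : ℝ | φ t ≠ ⊤} := hcon
    rcases hφdom with h | h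
    · rw [h] at this; exact absurd this (by simpa using hu.le)
    · rw [h] at this; exact absurd this (by simpa using hu)
  apply le_antisymm
  · apply iSup_le
    intro u
    rcases lt_trichotomy u 0 with hu | hu | hu
    · rw [hneg u hu, EReal.sub_top]; exact bot_le
    · subst hu
      rcases eq_or_ne (φ 0) ⊤ with h0 | h0
      · rw [h0, EReal.sub_top]; exact bot_le
      · set c := (φ 0).toReal with hc
        have hφ0 : φ 0 = ((c : ℝ) : EReal) := (EReal.coe_toReal h0 (hnbot 0)).symm
        have hc0 : 0 ≤ c := by
          have := hφpos 0
          rw [hφ0] at this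
          exact_mod_cast this
        have hterm : (((s * 0 : ℝ)) : EReal) - φ 0 = (((-c : ℝ)) : EReal) := by
          rw [hφ0, ← EReal.coe_sub]; norm_num
        rw [hterm]
        have hbound : ∀ x : ℝ, 0 < x → x < 1 → (φ x).toReal ≤ (1 - x) * c := by
          intro x hx hx1
          have h := hφconv 0 1 (1 - x) (by linarith) (by linarith)
          have h' : φ x ≤ (((1 - x) * c : ℝ) : EReal) := by
            have e1 : (1 - x) * 0 + (1 - (1 - x)) * 1 = x := by ring
            rw [e1] at h
            calc φ x ≤ ((1 - x : ℝ) : EReal) * φ 0 + ((1 - (1 - x) : ℝ) : EReal) * φ 1 := h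
              _ = (((1 - x) * c : ℝ) : EReal) := by
                  rw [hφ1, hφ0, mul_zero, add_zero, ← EReal.coe_mul]
          calc (φ x).toReal ≤ (((1 - x) * c : ℝ) : EReal).toReal :=
                EReal.toReal_le_toReal h' (hnbot x) (EReal.coe_ne_top _)
            _ = (1 - x) * c := EReal.toReal_coe _
        apply le_of_forall_lt
        intro b hb
        induction b using EReal.rec with
        | bot =>
          exact (EReal.bot_lt_coe _).trans_le
            (le_iSup (fun x : {x : ℝ // 0 < x} =>
              (((s * x.1 - (φ x.1).toReal : ℝ)) : EReal)) ⟨1, one_pos⟩)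
        | top => exact absurd hb (not_top_lt)
        | coe r =>
          have hr : r < -c := by exact_mod_cast hb
          obtain ⟨x, hx0, hx1, hxgt⟩ : ∃ x : ℝ, 0 < x ∧ x < 1 ∧ r < s * x - (1 - x) * c := by
            rcases le_or_gt 0 (s + c) with hs | hs
            · exact ⟨1/2, by norm_num, by norm_num, by nlinarith⟩
            · set q := (r + c) / (s + c) with hq
              have hq0 : 0 < q := div_pos_of_neg_of_neg (by linarith) hs
              refine ⟨min (1/2) (q/2), lt_min (by norm_num) (by linarith), ?_, ?_⟩
              · exact lt_of_le_of_lt (min_le_left _ _) (by norm_num)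
              · have hlt : min (1/2) (q/2) < q := lt_of_le_of_lt (min_le_right _ _) (by linarith)
                have := mul_lt_mul_of_neg_right hlt hs
                rw [hq, div_mul_cancel₀ _ (ne_of_lt hs)] at this
                nlinarith
          calc ((r : ℝ) : EReal) < ((s * x - (1 - x) * c : ℝ) : EReal) := by
                exact_mod_cast hxgt
            _ ≤ ((s * x - (φ x).toReal : ℝ) : EReal) := by
                have := hbound x hx0 hx1
                exact_mod_cast (by linarith : s * x - (1 - x) * c ≤ s * x - (φ x).toReal)
            _ ≤ _ := le_iSup (fun y : {y : ℝ // 0 < y} =>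
                (((s * y.1 - (φ y.1).toReal : ℝ)) : EReal)) ⟨x, hx0⟩
    · calc (((s * u : ℝ)) : EReal) - φ u = ((s * u - (φ u).toReal : ℝ) : EReal) := by
            rw [EReal.coe_sub, hcoe u hu]
        _ ≤ _ := le_iSup (fun y : {y : ℝ // 0 < y} =>
            (((s * y.1 - (φ y.1).toReal : ℝ)) : EReal)) ⟨u, hu⟩
  · apply iSup_le
    rintro ⟨x, hx⟩
    calc ((s * x - (φ x).toReal : ℝ) : EReal) = (((s * x : ℝ)) : EReal) - φ x := by
          rw [EReal.coe_sub, hcoe x hx]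
      _ ≤ fconj φ s := le_iSup (fun t : ℝ => (((s * t : ℝ)) : EReal) - φ t) x

lemma psi_rep (φ : ℝ → EReal) (hφpos : ∀ t, 0 ≤ φ t)
    (hφconv : ∀ t₁ t₂ : ℝ, ∀ u : ℝ, 0 < u → u < 1 →
      φ (u * t₁ + (1 - u) * t₂) ≤ (u : EReal) * φ t₁ + ((1 - u : ℝ) : EReal) * φ t₂)
    (hφdom : {t : ℝ | φ t ≠ ⊤} = Set.Ioi (0 : ℝ) ∨ {t : ℝ | φ t ≠ ⊤} = Set.Ici (0 : ℝ))
    (hφ1 : φ 1 = 0) (l t : ℝ) (hl : 0 ≤ l) :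
    psiPersp φ l t
      = ⨆ x : {x : ℝ // 0 < x}, (((x.1 * t - l * (φ x.1).toReal : ℝ)) : EReal) := by
  rcases hl.lt_or_eq with hl' | hl'
  · rw [psiPersp, if_pos hl', fconj_rep φ hφpos hφconv hφdom hφ1 (t / l),
      ereal_mul_iSup l hl']
    refine iSup_congr fun x => ?_
    rw [← EReal.coe_mul]
    congr 1
    field_simp
  · rw [psiPersp, if_neg (by rw [← hl']; exact lt_irrefl 0), ← hl']
    have hsimp : ∀ x : {x : ℝ // 0 < x},
        (((x.1 * t - 0 * (φ x.1).toReal : ℝ)) : EReal) = ((x.1 * t : ℝ) : EReal) := by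
      intro x; norm_num
    simp only [hsimp]
    split_ifs with ht
    · apply le_antisymm
      · apply le_of_forall_lt
        intro b hb
        induction b using EReal.rec with
        | bot =>
          exact (EReal.bot_lt_coe _).trans_le
            (le_iSup (fun x : {x : ℝ // 0 < x} => ((x.1 * t : ℝ) : EReal)) ⟨1, one_pos⟩)
        | top => exact absurd hb not_top_lt
        | coe r =>
          have hr : r < 0 := by exact_mod_cast hb
          rcases ht.lt_or_eq with ht' | ht'
          · have hx0 : 0 < r / t / 2 := by
              have : 0 < r / t := div_pos_of_neg_of_neg hr ht'
              linarith
            have hval : (r / t / 2) * t = r / 2 := by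
              field_simp
              rw [mul_div_assoc, div_self (ne_of_lt ht'), mul_one]
            calc ((r : ℝ) : EReal) < (((r / t / 2) * t : ℝ) : EReal) := by
                  rw [hval]; exact_mod_cast (by linarith : r < r / 2)
              _ ≤ _ := le_iSup (fun x : {x : ℝ // 0 < x} => ((x.1 * t : ℝ) : EReal)) ⟨_, hx0⟩
          · calc ((r : ℝ) : EReal) < (((1 : ℝ) * t : ℝ) : EReal) := by
                  rw [ht']; exact_mod_cast (by linarith : r < 1 * 0)
              _ ≤ _ := le_iSup (fun x : {x : ℝ // 0 < x} => ((x.1 * t : ℝ) : EReal)) ⟨1, one_pos⟩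
      · apply iSup_le
        rintro ⟨x, hx⟩
        have : x * t ≤ 0 := mul_nonpos_of_nonneg_of_nonpos hx.le ht
        exact_mod_cast EReal.coe_nonpos.2 this
    · push_neg at ht
      rw [eq_comm, eq_top_iff]
      apply le_of_forall_lt
      intro b hb
      induction b using EReal.rec with
      | bot =>
        exact (EReal.bot_lt_coe _).trans_le
          (le_iSup (fun x : {x : ℝ // 0 < x} => ((x.1 * t : ℝ) : EReal)) ⟨1, one_pos⟩)
      | top => exact absurd hb not_top_lt
      | coe r =>
        have hx0 : 0 < (|r| + 1) / t := div_pos (by positivity) ht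
        have hval : ((|r| + 1) / t) * t = |r| + 1 := by field_simp
        calc ((r : ℝ) : EReal) < ((((|r| + 1) / t) * t : ℝ) : EReal) := by
              rw [hval]
              exact_mod_cast (by have := le_abs_self r; linarith : r < |r| + 1)
          _ ≤ _ := le_iSup (fun x : {x : ℝ // 0 < x} => ((x.1 * t : ℝ) : EReal)) ⟨_, hx0⟩

lemma sum_iSup_comm {N : ℕ} (u : Fin N → {x : ℝ // 0 < x} → ℝ) (s : Finset (Fin N)) :
    ∑ i ∈ s, (⨆ c : {x : ℝ // 0 < x}, ((u i c : ℝ) : EReal)) =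
      ⨆ x : Fin N → {x : ℝ // 0 < x}, ((∑ i ∈ s, u i (x i) : ℝ) : EReal) := by
  classical
  induction s using Finset.induction_on with
  | empty => simp
  | insert j s' hj ih =>
    rw [Finset.sum_insert hj, ih]
    apply le_antisymm
    · rw [ereal_add_iSup]
      apply iSup_le
      intro x
      rw [add_comm, ereal_add_iSup]
      apply iSup_le
      intro c
      rw [← EReal.coe_add]
      have hkey : (∑ i ∈ s', u i (x i)) + u j c
          = u j ((Function.update x j c) j) + ∑ i ∈ s', u i ((Function.update x j c) i) := by
        rw [Function.update_self, add_comm]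
        congr 1
        refine Finset.sum_congr rfl fun i hi => ?_
        rw [Function.update_of_ne (by rintro rfl; exact hj hi)]
      calc ((∑ i ∈ s', u i (x i) + u j c : ℝ) : EReal)
          = ((∑ i ∈ insert j s', u i ((Function.update x j c) i) : ℝ) : EReal) := by
            rw [Finset.sum_insert hj, hkey]
        _ ≤ _ := le_iSup (fun y : Fin N → {x : ℝ // 0 < x} =>
            ((∑ i ∈ insert j s', u i (y i) : ℝ) : EReal)) (Function.update x j c)
    · apply iSup_le
      intro x
      rw [Finset.sum_insert hj, EReal.coe_add]
      exact add_le_add (le_iSup (fun c : {x : ℝ // 0 < x} => ((u j c : ℝ) : EReal)) (x j))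
        (le_iSup (fun y : Fin N → {x : ℝ // 0 < x} => ((∑ i ∈ s', u i (y i) : ℝ) : EReal)) x)

/-! ### The supremum representation of `gBall` -/

noncomputable def Faux {N n : ℕ} (φ : ℝ → EReal) (p : Fin N → ℝ) (ε : ℝ)
    (ℓ : Fin N → (Fin n → ℝ) → ℝ) (x : Fin N → {x : ℝ // 0 < x})
    (v : (Fin n → ℝ) × ℝ × ℝ) : ℝ :=
  v.2.1 * ε + v.2.2
    + ∑ i, p i * ((x i).1 * (ℓ i v.1 - v.2.2) - v.2.1 * (φ (x i).1).toReal)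

noncomputable def Gaux {N n : ℕ} (φ : ℝ → EReal) (p : Fin N → ℝ) (ε : ℝ)
    (ℓ : Fin N → (Fin n → ℝ) → ℝ) (v : (Fin n → ℝ) × ℝ × ℝ) : EReal :=
  ⨆ x : Fin N → {x : ℝ // 0 < x}, ((Faux φ p ε ℓ x v : ℝ) : EReal)

lemma gBall_eq_Gaux {N n : ℕ} (φ : ℝ → EReal) (hφpos : ∀ t, 0 ≤ φ t)
    (hφconv : ∀ t₁ t₂ : ℝ, ∀ u : ℝ, 0 < u → u < 1 →
      φ (u * t₁ + (1 - u) * t₂) ≤ (u : EReal) * φ t₁ + ((1 - u : ℝ) : EReal) * φ t₂)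
    (hφdom : {t : ℝ | φ t ≠ ⊤} = Set.Ioi (0 : ℝ) ∨ {t : ℝ | φ t ≠ ⊤} = Set.Ici (0 : ℝ))
    (hφ1 : φ 1 = 0)
    (p : Fin N → ℝ) (hppos : ∀ i, 0 < p i) (ε : ℝ)
    (ℓ : Fin N → (Fin n → ℝ) → ℝ) (v : (Fin n → ℝ) × ℝ × ℝ) (hv : 0 ≤ v.2.1) :
    gBall φ p ε ℓ v = Gaux φ p ε ℓ v := by
  rw [gBall, if_pos hv]
  have h1 : ∀ i : Fin N, ((p i : ℝ) : EReal) * psiPersp φ v.2.1 (ℓ i v.1 - v.2.2)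
      = ⨆ c : {x : ℝ // 0 < x},
          ((p i * (c.1 * (ℓ i v.1 - v.2.2) - v.2.1 * (φ c.1).toReal) : ℝ) : EReal) := by
    intro i
    rw [psi_rep φ hφpos hφconv hφdom hφ1 _ _ hv, ereal_mul_iSup _ (hppos i)]
    exact iSup_congr fun c => by rw [← EReal.coe_mul]
  simp only [h1]
  rw [sum_iSup_comm (fun i (c : {x : ℝ // 0 < x}) =>
    p i * (c.1 * (ℓ i v.1 - v.2.2) - v.2.1 * (φ c.1).toReal)) Finset.univ]
  rw [ereal_add_iSup]
  unfold Gaux Faux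
  exact iSup_congr fun x => by rw [← EReal.coe_add]

lemma Faux_convex {N n : ℕ} (φ : ℝ → EReal) (p : Fin N → ℝ) (hppos : ∀ i, 0 < p i) (ε : ℝ)
    (ℓ : Fin N → (Fin n → ℝ) → ℝ)
    (hℓconv : ∀ i, ∀ θ₁ θ₂ : Fin n → ℝ, ∀ t : ℝ, 0 < t → t < 1 →
      ℓ i (t • θ₁ + (1 - t) • θ₂) ≤ t * ℓ i θ₁ + (1 - t) * ℓ i θ₂)
    (x : Fin N → {x : ℝ // 0 < x}) (v w : (Fin n → ℝ) × ℝ × ℝ) (a : ℝ)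
    (ha : 0 < a) (ha1 : a < 1) :
    Faux φ p ε ℓ x (a • v + (1 - a) • w)
      ≤ a * Faux φ p ε ℓ x v + (1 - a) * Faux φ p ε ℓ x w := by
  have hcomp1 : (a • v + (1 - a) • w).1 = a • v.1 + (1 - a) • w.1 := rfl
  have hcomp2 : (a • v + (1 - a) • w).2.1 = a * v.2.1 + (1 - a) * w.2.1 := rfl
  have hcomp3 : (a • v + (1 - a) • w).2.2 = a * v.2.2 + (1 - a) * w.2.2 := rfl
  unfold Faux
  rw [hcomp1, hcomp2, hcomp3]
  have hterm : ∀ i ∈ (Finset.univ : Finset (Fin N)),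
      p i * ((x i).1 * (ℓ i (a • v.1 + (1 - a) • w.1) - (a * v.2.2 + (1 - a) * w.2.2))
          - (a * v.2.1 + (1 - a) * w.2.1) * (φ (x i).1).toReal)
        ≤ a * (p i * ((x i).1 * (ℓ i v.1 - v.2.2) - v.2.1 * (φ (x i).1).toReal))
          + (1 - a) * (p i * ((x i).1 * (ℓ i w.1 - w.2.2) - w.2.1 * (φ (x i).1).toReal)) := by
    intro i _
    have hi := hℓconv i v.1 w.1 a ha ha1
    have hpx : (0 : ℝ) ≤ p i * (x i).1 := le_of_lt (mul_pos (hppos i) (x i).2)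
    nlinarith [mul_le_mul_of_nonneg_left hi hpx]
  have hsum := Finset.sum_le_sum hterm
  have h2 : ∑ i : Fin N,
      (a * (p i * ((x i).1 * (ℓ i v.1 - v.2.2) - v.2.1 * (φ (x i).1).toReal))
        + (1 - a) * (p i * ((x i).1 * (ℓ i w.1 - w.2.2) - w.2.1 * (φ (x i).1).toReal)))
      = a * ∑ i : Fin N, p i * ((x i).1 * (ℓ i v.1 - v.2.2) - v.2.1 * (φ (x i).1).toReal)
        + (1 - a) * ∑ i : Fin N,
            p i * ((x i).1 * (ℓ i w.1 - w.2.2) - w.2.1 * (φ (x i).1).toReal) := by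
    rw [Finset.sum_add_distrib, ← Finset.mul_sum, ← Finset.mul_sum]
  rw [h2] at hsum
  nlinarith [hsum]

/-- for a lsc convex `φ : ℝ → [0,+∞]` with `φ(1) = 0` whose domain equals
`(0,+∞)` or `[0,+∞)`, `p ∈ M₁` with all `p_i > 0`, `ε > 0`, and convex real-valued
losses `ℓ_i : ℝ^n → ℝ`, the function `g(θ, λ, μ)` above is proper (never `−∞`, finite
somewhere), lower semicontinuous and convex. -/
theorem stmt_13 {N n : ℕ} (hN : 1 ≤ N) (hn : 1 ≤ n) (φ : ℝ → EReal)
    (hφpos : ∀ t, 0 ≤ φ t)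
    (hφlsc : LowerSemicontinuous φ)
    (hφconv : ∀ t₁ t₂ : ℝ, ∀ u : ℝ, 0 < u → u < 1 →
      φ (u * t₁ + (1 - u) * t₂) ≤ (u : EReal) * φ t₁ + ((1 - u : ℝ) : EReal) * φ t₂)
    (hφdom : {t : ℝ | φ t ≠ ⊤} = Set.Ioi (0 : ℝ) ∨ {t : ℝ | φ t ≠ ⊤} = Set.Ici (0 : ℝ))
    (hφ1 : φ 1 = 0)
    (p : Fin N → ℝ) (hp : p ∈ stdSimplex ℝ (Fin N)) (hppos : ∀ i, 0 < p i)
    (ε : ℝ) (hε : 0 < ε)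
    (ℓ : Fin N → (Fin n → ℝ) → ℝ)
    (hℓconv : ∀ i, ∀ θ₁ θ₂ : Fin n → ℝ, ∀ t : ℝ, 0 < t → t < 1 →
      ℓ i (t • θ₁ + (1 - t) • θ₂) ≤ t * ℓ i θ₁ + (1 - t) * ℓ i θ₂) :
    (∀ v : (Fin n → ℝ) × ℝ × ℝ, gBall φ p ε ℓ v ≠ ⊥) ∧
    (∃ v : (Fin n → ℝ) × ℝ × ℝ, gBall φ p ε ℓ v ≠ ⊤) ∧
    LowerSemicontinuous (gBall φ p ε ℓ) ∧
    (∀ v w : (Fin n → ℝ) × ℝ × ℝ, ∀ t : ℝ, 0 < t → t < 1 →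
      gBall φ p ε ℓ (t • v + (1 - t) • w)
        ≤ (t : EReal) * gBall φ p ε ℓ v + ((1 - t : ℝ) : EReal) * gBall φ p ε ℓ w) := by
  classical
  have hconvOn : ∀ i, ConvexOn ℝ Set.univ (ℓ i) := by
    intro i
    refine ⟨convex_univ, ?_⟩
    intro θ₁ _ θ₂ _ a b ha hb hab
    rcases eq_or_lt_of_le ha with h0 | h0
    · have hb1 : b = 1 := by linarith
      rw [← h0, hb1]; simp
    · rcases eq_or_lt_of_le hb with h1 | h1
      · have ha1 : a = 1 := by linarith
        rw [← h1, ha1]; simp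
      · have hb' : b = 1 - a := by linarith
        subst hb'
        have h := hℓconv i θ₁ θ₂ a h0 (by linarith)
        simpa [smul_eq_mul] using h
  have ℓcont : ∀ i, Continuous (ℓ i) := fun i => (hconvOn i).locallyLipschitz.continuous
  have hFcont : ∀ x : Fin N → {x : ℝ // 0 < x},
      Continuous fun v : (Fin n → ℝ) × ℝ × ℝ => ((Faux φ p ε ℓ x v : ℝ) : EReal) := by
    intro x
    rw [EReal.continuous_coe_iff]
    unfold Faux
    apply Continuous.add
    apply Continuous.add
    · exact (continuous_snd.fst).mul continuous_const
    · exact continuous_snd.snd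
    · apply continuous_finset_sum
      intro i _
      exact continuous_const.mul
        ((continuous_const.mul (((ℓcont i).comp continuous_fst).sub continuous_snd.snd)).sub
          ((continuous_snd.fst).mul continuous_const))
  have heq : ∀ v : (Fin n → ℝ) × ℝ × ℝ, 0 ≤ v.2.1 →
      gBall φ p ε ℓ v = Gaux φ p ε ℓ v := fun v hv =>
    gBall_eq_Gaux φ hφpos hφconv hφdom hφ1 p hppos ε ℓ v hv
  have hGne : ∀ v, Gaux φ p ε ℓ v ≠ ⊥ := by
    intro v
    have hle := le_iSup (fun x : Fin N → {x : ℝ // 0 < x} =>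
      ((Faux φ p ε ℓ x v : ℝ) : EReal)) (fun _ => ⟨1, one_pos⟩)
    exact ((EReal.bot_lt_coe _).trans_le hle).ne'
  have hne : ∀ v, gBall φ p ε ℓ v ≠ ⊥ := by
    intro v
    by_cases hv : 0 ≤ v.2.1
    · rw [heq v hv]; exact hGne v
    · rw [gBall, if_neg hv]; exact top_ne_bot
  refine ⟨hne, ?_, ?_, ?_⟩
  · haveI hNE : Nonempty (Fin N) := ⟨⟨0, hN⟩⟩
    obtain ⟨μ0, hμ0⟩ : ∃ μ0 : ℝ, ∀ i, ℓ i 0 ≤ μ0 :=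
      ⟨Finset.univ.sup' Finset.univ_nonempty (fun i => ℓ i 0),
        fun i => Finset.le_sup' (fun i => ℓ i 0) (Finset.mem_univ i)⟩
    refine ⟨((0 : Fin n → ℝ), (0 : ℝ), μ0), ?_⟩
    have hpsi : ∀ i : Fin N, psiPersp φ (0 : ℝ) (ℓ i 0 - μ0) = 0 := by
      intro i
      rw [psiPersp, if_neg (lt_irrefl 0), if_pos (by linarith [hμ0 i])]
    rw [gBall]
    simp only [if_pos (le_refl (0 : ℝ)), hpsi, mul_zero, Finset.sum_const_zero, add_zero]
    exact EReal.coe_ne_top _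
  · intro v
    by_cases hv : 0 ≤ v.2.1
    · intro y hy
      rw [heq v hv] at hy
      have hG : LowerSemicontinuousAt (Gaux φ p ε ℓ) v :=
        (lowerSemicontinuous_iSup (fun x => (hFcont x).lowerSemicontinuous)) v
      filter_upwards [hG y hy] with z hz
      calc y < Gaux φ p ε ℓ z := hz
        _ ≤ gBall φ p ε ℓ z := by
            by_cases hz' : 0 ≤ z.2.1
            · exact (heq z hz').ge
            · rw [gBall, if_neg hz']; exact le_top
    · intro y hy
      have hopen : IsOpen {z : (Fin n → ℝ) × ℝ × ℝ | z.2.1 < 0} :=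
        isOpen_lt (continuous_snd.fst) continuous_const
      have hmem : v ∈ {z : (Fin n → ℝ) × ℝ × ℝ | z.2.1 < 0} := not_le.1 hv
      filter_upwards [hopen.mem_nhds hmem] with z hz
      rw [gBall, if_neg (not_le.2 hz)]
      rw [gBall, if_neg hv] at hy
      exact hy
  · intro v w a ha ha1
    by_cases hv : gBall φ p ε ℓ v = ⊤
    · rw [hv, EReal.coe_mul_top_of_pos ha, EReal.top_add_of_ne_bot
        (ereal_coe_mul_ne_bot (by linarith) (hne w))]
      exact le_top
    by_cases hw : gBall φ p ε ℓ w = ⊤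
    · rw [hw, EReal.coe_mul_top_of_pos (by linarith : (0:ℝ) < 1 - a),
        EReal.add_top_of_ne_bot (ereal_coe_mul_ne_bot ha (hne v))]
      exact le_top
    have hlv : 0 ≤ v.2.1 := by
      by_contra h; exact hv (by rw [gBall, if_neg h])
    have hlw : 0 ≤ w.2.1 := by
      by_contra h; exact hw (by rw [gBall, if_neg h])
    have hlc : 0 ≤ (a • v + (1 - a) • w).2.1 := by
      have hc2 : (a • v + (1 - a) • w).2.1 = a * v.2.1 + (1 - a) * w.2.1 := rfl
      rw [hc2]
      have h1 := mul_nonneg ha.le hlv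
      have h2 := mul_nonneg (by linarith : (0:ℝ) ≤ 1 - a) hlw
      linarith
    rw [heq v hlv, heq w hlw, heq _ hlc]
    unfold Gaux
    apply iSup_le
    intro x
    calc ((Faux φ p ε ℓ x (a • v + (1 - a) • w) : ℝ) : EReal)
        ≤ ((a * Faux φ p ε ℓ x v + (1 - a) * Faux φ p ε ℓ x w : ℝ) : EReal) := by
          exact_mod_cast Faux_convex φ p hppos ε ℓ hℓconv x v w a ha ha1
      _ = (a : EReal) * ((Faux φ p ε ℓ x v : ℝ) : EReal)
            + ((1 - a : ℝ) : EReal) * ((Faux φ p ε ℓ x w : ℝ) : EReal) := by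
          rw [EReal.coe_add, EReal.coe_mul, EReal.coe_mul]
      _ ≤ _ := add_le_add
          (mul_le_mul_of_nonneg_left
            (le_iSup (fun y : Fin N → {x : ℝ // 0 < x} =>
              ((Faux φ p ε ℓ y v : ℝ) : EReal)) x) (by exact_mod_cast ha.le))
          (mul_le_mul_of_nonneg_left
            (le_iSup (fun y : Fin N → {x : ℝ // 0 < x} =>
              ((Faux φ p ε ℓ y w : ℝ) : EReal)) x)
            (by exact_mod_cast (by linarith : (0:ℝ) ≤ 1 - a)))
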